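/- arXiv:0811.2588 — 2 statements merged into one kernel-verified Lean document; each statement's English description precedes it below -/
import Mathlib

section
/- Let f be a Herglotz-Pick function on the double slit plane ℂ₁ = ℂ₊ ∪ ℂ₋ ∪ (-1,1), real and finite on (-1,1), with f(c₁) = c₃ where c₁ ∈ (-1,1) and f strictly increasing on (-1,1). Then for all x ∈ (-1,1) with x ≠ c₁: (1+c₁)/((x−c₁)(1+x)) ≤ f'(x)/(f(x)−c₃) ≤ (1−c₁)/((x−c₁)(1−x)). -/
open Complex Set

set_option maxHeartbeats 1600000

/-- The double slit plane `ℂ₁ = ℂ₊ ∪ ℂ₋ ∪ (-1,1)`. -/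
def doubleSlitPlane : Set ℂ := {z : ℂ | z.im ≠ 0 ∨ |z.re| < 1}

namespace HerglotzBounds

lemma isOpen_dsp : IsOpen doubleSlitPlane := by
  have h1 : IsOpen {z : ℂ | z.im ≠ 0} := isOpen_ne.preimage Complex.continuous_im
  have h2 : IsOpen {z : ℂ | |z.re| < 1} :=
    isOpen_lt (continuous_abs.comp Complex.continuous_re) continuous_const
  exact h1.union h2

noncomputable def K : ℂ → ℂ := fun w => 2 * w / (1 + w ^ 2)

lemma K_denom_ne {w : ℂ} (h : normSq w < 1) : 1 + w ^ 2 ≠ 0 := by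
  intro h0
  have h1 : w ^ 2 = -1 := by linear_combination h0
  have h2 : normSq w * normSq w = 1 := by
    have := congrArg normSq h1
    rwa [sq, normSq_mul, normSq_neg, normSq_one] at this
  nlinarith [normSq_nonneg w]

lemma K_im (w : ℂ) : (K w).im = 2 * w.im * (1 - normSq w) / normSq (1 + w ^ 2) := by
  rw [K, Complex.div_im]
  congr 1
  simp [Complex.normSq_apply, pow_two, Complex.mul_re, Complex.mul_im]
  ring

lemma K_ofReal (a : ℝ) : K (a : ℂ) = ((2 * a / (1 + a ^ 2) : ℝ) : ℂ) := by
  rw [K]; push_cast; ring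

lemma kR_mem {a : ℝ} (h : |a| < 1) : 2 * a / (1 + a ^ 2) ∈ Ioo (-1 : ℝ) 1 := by
  have h1 : (0:ℝ) < 1 + a ^ 2 := by positivity
  have ha := abs_lt.mp h
  constructor
  · rw [lt_div_iff₀ h1]
    nlinarith [mul_pos (by linarith : (0:ℝ) < 1 + a) (by linarith : (0:ℝ) < 1 + a)]
  · rw [div_lt_iff₀ h1]
    nlinarith [mul_pos (by linarith : (0:ℝ) < 1 - a) (by linarith : (0:ℝ) < 1 - a)]

lemma K_mem_dsp {w : ℂ} (h : normSq w < 1) : K w ∈ doubleSlitPlane := by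
  rcases eq_or_ne w.im 0 with h0 | h0
  · right
    have hw : w = (w.re : ℂ) := Complex.ext (by simp) (by simp [h0])
    have hre : |w.re| < 1 := by
      rw [abs_lt]
      have hns := Complex.normSq_apply w
      constructor <;> nlinarith [hns, h, sq_nonneg w.re]
    rw [hw, K_ofReal]
    simp only [Complex.ofReal_re]
    have := kR_mem hre
    exact abs_lt.mpr ⟨this.1, this.2⟩
  · left
    rw [K_im w]
    have h1 : 0 < 1 - normSq w := by linarith
    have h2 : 0 < normSq (1 + w ^ 2) := normSq_pos.mpr (K_denom_ne h)
    exact div_ne_zero (mul_ne_zero (mul_ne_zero two_ne_zero h0) h1.ne') h2.ne'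

lemma K_hasDerivAt {w : ℂ} (h : 1 + w ^ 2 ≠ 0) :
    HasDerivAt K (2 * (1 - w ^ 2) / (1 + w ^ 2) ^ 2) w := by
  have h1 : HasDerivAt (fun z : ℂ => 2 * z) 2 w := by
    simpa using (hasDerivAt_id w).const_mul (2 : ℂ)
  have h2 : HasDerivAt (fun z : ℂ => 1 + z ^ 2) (2 * w) w := by
    simpa using (hasDerivAt_pow 2 w).const_add (1 : ℂ)
  have h3 := h1.div h2 h
  refine h3.congr_deriv ?_
  congr 1
  ring

lemma exists_param {y : ℝ} (hy : y ∈ Ioo (-1 : ℝ) 1) :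
    ∃ a : ℝ, |a| < 1 ∧ 2 * a / (1 + a ^ 2) = y := by
  have hy2 : y ^ 2 < 1 := by nlinarith [hy.1, hy.2]
  set s := Real.sqrt (1 - y ^ 2) with hs
  have hspos : 0 < s := Real.sqrt_pos.mpr (by linarith)
  have hs2 : s ^ 2 = 1 - y ^ 2 := Real.sq_sqrt (by linarith)
  refine ⟨y / (1 + s), ?_, ?_⟩
  · rw [abs_div, abs_of_pos (by linarith : (0:ℝ) < 1 + s)]
    rw [div_lt_one (by linarith)]
    have := abs_lt.mpr ⟨hy.1, hy.2⟩
    calc |y| < 1 := abs_lt.mpr hy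
      _ ≤ 1 + s := by linarith
  · have hne : (1 : ℝ) + s ≠ 0 := by linarith
    field_simp
    ring_nf
    linear_combination (-y) * hs2


lemma im_deriv_helper {u : ℝ → ℂ} {d : ℂ} {t : ℝ} (h : HasDerivAt u d t) :
    HasDerivAt (fun s => (u s).im) d.im t := by
  have h2 := (Complex.imCLM.hasFDerivAt (x := u t)).comp t h.hasFDerivAt
  have h3 := h2.hasDerivAt
  simpa [Function.comp_def] using h3

lemma eq_ofReal_of_im_eq_zero {z : ℂ} (h : z.im = 0) : z = ((z.re : ℝ) : ℂ) :=
  Complex.ext (by simp) (by simp [h])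

lemma mul_im_zero {z u : ℂ} (hz : z.im = 0) (hu : u.im = 0) : (z * u).im = 0 := by
  rw [Complex.mul_im, hz, hu]; ring

lemma key_ineq (Φ : ℂ → ℂ) {R : ℝ} (hR : 1 < R)
    (hΦ : DifferentiableOn ℂ Φ (Metric.ball 0 R))
    (w₁ : ℝ) (hw₁ : |w₁| < 1) (hRw : R * |w₁| < 1)
    (hQreal : ∀ a : ℝ, |a| ≤ 1 → (Φ (a : ℂ)).im = 0)
    (hQpos : ∀ w : ℂ, ‖w‖ ≤ 1 → 0 < w.im → 0 ≤ (Φ w).im)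
    (r : ℝ) (hr : |r| < 1) (hrw : r ≠ w₁) {dA : ℂ}
    (hdA : HasDerivAt Φ dA (r : ℂ)) :
    ((-(2 * (1 - r))) * ((1 - r * w₁) * (r - w₁))⁻¹
        + (1 - r) ^ 2 * (-((-w₁) * (r - w₁) + (1 - r * w₁) * 1) / ((1 - r * w₁) * (r - w₁)) ^ 2))
        * ((Φ (r : ℂ)).re - (Φ (w₁ : ℂ)).re)
      + (1 - r) ^ 2 * ((1 - r * w₁) * (r - w₁))⁻¹ * dA.re ≤ 0 := by
  have hw₁' := abs_lt.mp hw₁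
  have hr' := abs_lt.mp hr
  set w₁c : ℂ := ((w₁ : ℝ) : ℂ) with hw₁c
  have hw₁mem : w₁c ∈ Metric.ball (0 : ℂ) R := by
    simp only [Metric.mem_ball, Complex.dist_eq, sub_zero, hw₁c, Complex.norm_real, Real.norm_eq_abs]
    linarith
  have hball_ne : ∀ w : ℂ, ‖w‖ < R → (1 : ℂ) - w * w₁c ≠ 0 := by
    intro w hw h0
    have h1 : w * w₁c = 1 := by linear_combination -h0
    have h2 := congrArg (‖·‖) h1
    rw [norm_mul, hw₁c, Complex.norm_real, Real.norm_eq_abs, norm_one] at h2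
    have h3 : ‖w‖ * |w₁| ≤ R * |w₁| := mul_le_mul_of_nonneg_right hw.le (abs_nonneg _)
    linarith
  set Ψ : ℂ → ℂ := fun w => (1 - w) ^ 2 * ((1 : ℂ) - w * w₁c)⁻¹ * dslope Φ w₁c w with hΨdef
  -- differentiability of Ψ
  have hΨ : DifferentiableOn ℂ Ψ (Metric.ball 0 R) := by
    apply DifferentiableOn.mul
    · apply DifferentiableOn.mul
      · exact (((differentiable_const (1:ℂ)).sub differentiable_id).pow 2).differentiableOn
      · apply DifferentiableOn.inv
        · exact ((differentiable_const (1:ℂ)).sub (differentiable_id.mul_const w₁c)).differentiableOn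
        · intro w hw
          exact hball_ne w (by simpa [Complex.dist_eq] using hw)
    · exact (Complex.differentiableOn_dslope (Metric.isOpen_ball.mem_nhds hw₁mem)).mpr hΦ
  -- derivative of Φ at w₁ is real
  have hdΦ : HasDerivAt Φ (deriv Φ w₁c) w₁c :=
    (hΦ.differentiableAt (Metric.isOpen_ball.mem_nhds hw₁mem)).hasDerivAt
  have hderiv_im : (deriv Φ w₁c).im = 0 := by
    have h1 : HasDerivAt (fun s : ℝ => (Φ (s : ℂ)).im) (deriv Φ w₁c).im w₁ :=
      im_deriv_helper hdΦ.comp_ofReal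
    have h2 : (fun s : ℝ => (Φ (s : ℂ)).im) =ᶠ[nhds w₁] (fun _ => (0 : ℝ)) := by
      have hmem : Ioo (-1 : ℝ) 1 ∈ nhds w₁ := Ioo_mem_nhds hw₁'.1 hw₁'.2
      filter_upwards [hmem] with s hs
      exact hQreal s (abs_lt.mpr ⟨hs.1, hs.2⟩).le
    have h3 : HasDerivAt (fun s : ℝ => (Φ (s : ℂ)).im) 0 w₁ :=
      (hasDerivAt_const w₁ (0 : ℝ)).congr_of_eventuallyEq h2
    exact h1.unique h3
  -- Ψ is real on [-1,1]
  have hΨreal : ∀ a : ℝ, |a| ≤ 1 → (Ψ (a : ℂ)).im = 0 := by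
    intro a ha
    apply mul_im_zero
    apply mul_im_zero
    · have : ((1 : ℂ) - (a : ℂ)) ^ 2 = (((1 - a) ^ 2 : ℝ) : ℂ) := by push_cast; ring
      rw [this, Complex.ofReal_im]
    · have : ((1 : ℂ) - (a : ℂ) * w₁c) = (((1 - a * w₁ : ℝ)) : ℂ) := by
        rw [hw₁c]; push_cast; ring
      rw [this, ← Complex.ofReal_inv, Complex.ofReal_im]
    · rcases eq_or_ne (a : ℂ) w₁c with he | hne
      · rw [he, dslope_same]; exact hderiv_im
      · rw [dslope_of_ne _ hne, slope_def_field]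
        have h4 : ((a : ℂ) - w₁c) = ((a - w₁ : ℝ) : ℂ) := by rw [hw₁c]; push_cast; ring
        rw [h4, div_eq_mul_inv, ← Complex.ofReal_inv]
        apply mul_im_zero
        · rw [Complex.sub_im, hQreal a ha, hQreal w₁ hw₁.le]; ring
        · exact Complex.ofReal_im _
  -- boundary estimate on the upper unit semicircle
  have hsphere : ∀ w : ℂ, ‖w‖ = 1 → 0 < w.im → (Ψ w).im ≤ 0 := by
    intro w hw hwim
    have hwne : w ≠ w₁c := by
      intro h
      rw [h, hw₁c] at hwim
      simp at hwim
    have hsub_ne : w - w₁c ≠ 0 := sub_ne_zero.mpr hwne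
    have hns_ne : normSq (w - w₁c) ≠ 0 := normSq_pos.mpr hsub_ne |>.ne'
    have hconj : w * (starRingEnd ℂ) w = 1 := by
      rw [Complex.mul_conj]
      rw [show normSq w = 1 by rw [← Complex.sq_norm, hw]; norm_num]
      norm_num
    have hne1 : (1 : ℂ) - w * w₁c ≠ 0 := hball_ne w (by rw [hw]; exact hR)
    have hΨw : Ψ w = -(((normSq (1 - w) / normSq (w - w₁c)) : ℝ) : ℂ) * (Φ w - Φ w₁c) := by
      rw [hΨdef, hw₁c]
      simp only
      have hns1 : ((normSq (1 - w) : ℝ) : ℂ) = (1 - w) * (starRingEnd ℂ) (1 - w) := by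
        rw [Complex.mul_conj]
      have hns2 : ((normSq (w - ((w₁:ℝ):ℂ)) : ℝ) : ℂ)
          = (w - ((w₁:ℝ):ℂ)) * (starRingEnd ℂ) (w - ((w₁:ℝ):ℂ)) := by
        rw [Complex.mul_conj]
      have hns_ne' : normSq (w - ((w₁:ℝ):ℂ)) ≠ 0 := by rw [← hw₁c]; exact hns_ne
      have hwne' : w ≠ ((w₁:ℝ):ℂ) := by rw [← hw₁c]; exact hwne
      have hsub_ne' : w - ((w₁:ℝ):ℂ) ≠ 0 := by rw [← hw₁c]; exact hsub_ne
      have hne1' : (1:ℂ) - w * ((w₁:ℝ):ℂ) ≠ 0 := by rw [← hw₁c]; exact hne1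
      have hns2c : ((normSq (w - ((w₁:ℝ):ℂ)) : ℝ) : ℂ) ≠ 0 := by exact_mod_cast hns_ne'
      rw [dslope_of_ne _ hwne', slope_def_field]
      push_cast
      field_simp
      rw [hns1, hns2, map_sub, map_sub, map_one, Complex.conj_ofReal]
      ring_nf
      linear_combination (-(1 - w) * (w - ((w₁:ℝ):ℂ)) * (1 - ((w₁:ℝ):ℂ)) * (Φ w - Φ ((w₁:ℝ):ℂ))) * hconj
    rw [hΨw]
    have h6 : 0 ≤ (Φ w - Φ w₁c).im := by
      rw [Complex.sub_im, hQreal w₁ hw₁.le]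
      simpa using hQpos w hw.le hwim
    have h7 : 0 ≤ normSq (1 - w) / normSq (w - w₁c) :=
      div_nonneg (normSq_nonneg _) (normSq_nonneg _)
    have h8 : (-(((normSq (1 - w) / normSq (w - w₁c)) : ℝ) : ℂ) * (Φ w - Φ w₁c)).im
        = -(normSq (1 - w) / normSq (w - w₁c)) * (Φ w - Φ w₁c).im := by
      rw [show -(((normSq (1 - w) / normSq (w - w₁c)) : ℝ) : ℂ)
          = ((-(normSq (1 - w) / normSq (w - w₁c)) : ℝ) : ℂ) by push_cast; ring]
      simp [Complex.mul_im]
    rw [h8]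
    nlinarith
  -- maximum principle
  have hmax : ∀ w : ℂ, ‖w‖ < 1 → 0 < w.im → (Ψ w).im ≤ 0 := by
    set U : Set ℂ := Metric.ball (0 : ℂ) 1 ∩ {z : ℂ | 0 < z.im} with hU
    have hbd : Bornology.IsBounded U := Metric.isBounded_ball.subset inter_subset_left
    set E : ℂ → ℂ := fun w => Complex.exp (-(Complex.I * Ψ w)) with hE
    have hEdiff : DifferentiableOn ℂ E (Metric.ball 0 R) := ((hΨ.const_mul Complex.I).neg).cexp
    have hsub1 : U ⊆ Metric.ball (0 : ℂ) R :=
      inter_subset_left.trans (Metric.ball_subset_ball hR.le)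
    have hsub2 : closure U ⊆ Metric.ball (0 : ℂ) R := by
      calc closure U ⊆ closure (Metric.ball (0 : ℂ) 1) := closure_mono inter_subset_left
        _ = Metric.closedBall 0 1 := closure_ball 0 one_ne_zero
        _ ⊆ Metric.ball 0 R := Metric.closedBall_subset_ball hR
    have hdc : DiffContOnCl ℂ E U := ⟨hEdiff.mono hsub1, hEdiff.continuousOn.mono hsub2⟩
    have hnormE : ∀ z : ℂ, ‖E z‖ = Real.exp ((Ψ z).im) := by
      intro z
      rw [hE]
      simp only
      rw [Complex.norm_exp]
      congr 1
      simp [Complex.mul_re]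
    have hclosed : IsClosed {z : ℂ | 0 ≤ z.im} := isClosed_le continuous_const Complex.continuous_im
    have hclosed' : IsClosed {z : ℂ | z.im ≤ 0} := isClosed_le Complex.continuous_im continuous_const
    have hfr : ∀ z ∈ frontier U, ‖E z‖ ≤ 1 := by
      intro z hz
      rw [hnormE, Real.exp_le_one_iff]
      rcases frontier_inter_subset _ _ hz with h9 | h9
      · have hz1 : ‖z‖ = 1 := by
          have h10 := h9.1
          rw [frontier_ball 0 one_ne_zero] at h10
          simpa [Complex.dist_eq] using h10
        have hz2 : 0 ≤ z.im := by
          have hcl : closure {z : ℂ | 0 < z.im} ⊆ {z : ℂ | 0 ≤ z.im} :=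
            closure_minimal (fun u hu => show (0:ℝ) ≤ u.im from (show (0:ℝ) < u.im from hu).le) hclosed
          exact hcl h9.2
        rcases hz2.lt_or_eq with h11 | h11
        · exact hsphere z hz1 h11
        · have hzre : z = ((z.re : ℝ) : ℂ) := eq_ofReal_of_im_eq_zero h11.symm
          rw [hzre]
          rw [hΨreal z.re (by rw [← Real.norm_eq_abs, ← Complex.norm_real, ← hzre, hz1])]
      · have him0 : z.im = 0 := by
          have h10 := h9.2
          rw [frontier_eq_closure_inter_closure] at h10
          have h11 : closure {z : ℂ | 0 < z.im} ⊆ {z : ℂ | 0 ≤ z.im} :=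
            closure_minimal (fun u hu => show (0:ℝ) ≤ u.im from (show (0:ℝ) < u.im from hu).le) hclosed
          have h12 : closure {z : ℂ | 0 < z.im}ᶜ ⊆ {z : ℂ | z.im ≤ 0} := by
            apply closure_minimal _ hclosed'
            intro u hu
            simpa using hu
          have := h11 h10.1
          have := h12 h10.2
          simp only [mem_setOf_eq] at *
          linarith
        have hz1 : ‖z‖ ≤ 1 := by
          have h10 := h9.1
          rw [closure_ball 0 one_ne_zero] at h10
          simpa [Complex.dist_eq] using h10
        have hzre : z = ((z.re : ℝ) : ℂ) := eq_ofReal_of_im_eq_zero him0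
        rw [hzre, hΨreal z.re (by rw [← Real.norm_eq_abs, ← Complex.norm_real, ← hzre]; exact hz1)]
    intro w hw hwim
    have hwU : w ∈ U := ⟨by simpa [Complex.dist_eq] using hw, hwim⟩
    have h13 := Complex.norm_le_of_forall_mem_frontier_norm_le hbd hdc hfr (subset_closure hwU)
    rw [hnormE, Real.exp_le_one_iff] at h13
    exact h13
  -- derivative of Im Ψ along the vertical direction at r
  set rc : ℂ := ((r : ℝ) : ℂ) with hrc
  have hrmem : rc ∈ Metric.ball (0 : ℂ) R := by
    simp only [Metric.mem_ball, Complex.dist_eq, sub_zero, hrc, Complex.norm_real, Real.norm_eq_abs]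
    linarith
  have hΨr : HasDerivAt Ψ (deriv Ψ rc) rc :=
    (hΨ.differentiableAt (Metric.isOpen_ball.mem_nhds hrmem)).hasDerivAt
  set dΨ : ℂ := deriv Ψ rc with hdΨ
  have hΨre_le : dΨ.re ≤ 0 := by
    have hpath : HasDerivAt (fun t : ℝ => rc + (t : ℂ) * Complex.I) Complex.I 0 := by
      have h1 : HasDerivAt (fun t : ℝ => ((t : ℝ) : ℂ)) 1 0 := by
        simpa using (hasDerivAt_id ((0 : ℝ) : ℂ)).comp_ofReal
      simpa using (h1.mul_const Complex.I).const_add rc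
    have hcomp : HasDerivAt (fun t : ℝ => Ψ (rc + (t : ℂ) * Complex.I)) (Complex.I * dΨ) 0 := by
      have h2 : HasDerivAt Ψ dΨ ((fun t : ℝ => rc + (t : ℂ) * Complex.I) 0) := by
        simpa using hΨr
      have h3 := h2.scomp 0 hpath
      simpa [smul_eq_mul, Function.comp_def] using h3
    have him' : HasDerivAt (fun t : ℝ => (Ψ (rc + (t : ℂ) * Complex.I)).im) ((Complex.I * dΨ).im) 0 :=
      im_deriv_helper hcomp
    have hval : (Complex.I * dΨ).im = dΨ.re := by simp [Complex.mul_im]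
    set t₀ : ℝ := 1 - |r| with ht₀
    have ht₀pos : 0 < t₀ := by simp [ht₀]; linarith
    have hevent : ∀ t ∈ Ioo (0 : ℝ) t₀, (Ψ (rc + (t : ℂ) * Complex.I)).im ≤ 0 := by
      intro t ht
      apply hmax
      · calc ‖(rc + (t : ℂ) * Complex.I)‖
            ≤ ‖rc‖ + ‖((t : ℂ) * Complex.I)‖ := norm_add_le _ _
          _ = |r| + |t| := by simp [hrc]
          _ = |r| + t := by rw [abs_of_pos ht.1]
          _ < 1 := by have := ht.2; simp [ht₀] at this; linarith
      · simp [hrc]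
        exact ht.1
    have h00 : (Ψ (rc + ((0 : ℝ) : ℂ) * Complex.I)).im = 0 := by
      simpa [hrc] using hΨreal r hr.le
    have hslope := hasDerivAt_iff_tendsto_slope.mp him'
    have hslope' : Filter.Tendsto (slope (fun t : ℝ => (Ψ (rc + (t : ℂ) * Complex.I)).im) 0)
        (nhdsWithin 0 (Ioi 0)) (nhds ((Complex.I * dΨ).im)) :=
      hslope.mono_left (nhdsWithin_mono 0 (fun t ht => ne_of_gt ht))
    have hle : (Complex.I * dΨ).im ≤ 0 := by
      apply le_of_tendsto hslope'
      filter_upwards [Ioo_mem_nhdsGT_of_mem ⟨le_refl (0:ℝ), ht₀pos⟩] with t ht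
      rw [slope_def_field]
      apply div_nonpos_of_nonpos_of_nonneg
      · rw [sub_nonpos]
        calc (Ψ (rc + (t : ℂ) * Complex.I)).im ≤ 0 := hevent t ht
          _ = (Ψ (rc + ((0:ℝ) : ℂ) * Complex.I)).im := h00.symm
      · simp [ht.1.le]
    rwa [hval] at hle
  -- identify the real derivative
  have hrwc : rc ≠ w₁c := by
    rw [hrc, hw₁c]
    exact_mod_cast hrw
  have hm_ne : (1 - r * w₁) * (r - w₁) ≠ 0 := by
    have h1 : |r * w₁| < 1 := by
      rw [abs_mul]
      calc |r| * |w₁| ≤ 1 * |w₁| := mul_le_mul_of_nonneg_right hr.le (abs_nonneg _)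
        _ = |w₁| := one_mul _
        _ < 1 := hw₁
    have h2 := abs_lt.mp h1
    exact mul_ne_zero (by linarith) (sub_ne_zero.mpr hrw)
  set cρ : ℝ := (Φ w₁c).re with hcρ
  have hEq : (fun s : ℝ => (Ψ ((s : ℝ) : ℂ)).re)
      =ᶠ[nhds r] (fun s : ℝ => ((1 - s) ^ 2 * ((1 - s * w₁) * (s - w₁))⁻¹) * ((Φ ((s : ℝ) : ℂ)).re - cρ)) := by
    have hopen : IsOpen {s : ℝ | s ≠ w₁ ∧ |s| < 1} :=
      (isOpen_ne).inter (isOpen_lt _root_.continuous_abs continuous_const)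
    have hmemr : r ∈ {s : ℝ | s ≠ w₁ ∧ |s| < 1} := ⟨hrw, hr⟩
    filter_upwards [hopen.mem_nhds hmemr] with s hs
    obtain ⟨hs1, hs2⟩ := hs
    have hsne : ((s : ℝ) : ℂ) ≠ w₁c := by rw [hw₁c]; exact_mod_cast hs1
    have hsw : |s * w₁| < 1 := by
      rw [abs_mul]
      calc |s| * |w₁| ≤ 1 * |w₁| := mul_le_mul_of_nonneg_right hs2.le (abs_nonneg _)
        _ < 1 := by rw [one_mul]; exact hw₁
    have hd1 : (1 - s * w₁ : ℝ) ≠ 0 := by have := abs_lt.mp hsw; linarith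
    have hd2 : (s - w₁ : ℝ) ≠ 0 := sub_ne_zero.mpr hs1
    have hΦs : Φ ((s : ℝ) : ℂ) = (((Φ ((s : ℝ) : ℂ)).re : ℝ) : ℂ) :=
      eq_ofReal_of_im_eq_zero (hQreal s hs2.le)
    have hΦw : Φ w₁c = ((cρ : ℝ) : ℂ) := by
      rw [hcρ]
      exact eq_ofReal_of_im_eq_zero (hQreal w₁ hw₁.le)
    have hcmplx : Ψ ((s : ℝ) : ℂ)
        = ((((1 - s) ^ 2 * ((1 - s * w₁) * (s - w₁))⁻¹) * ((Φ ((s : ℝ) : ℂ)).re - cρ) : ℝ) : ℂ) := by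
      rw [hΨdef]
      simp only
      rw [dslope_of_ne _ hsne, slope_def_field, hΦs, hΦw]
      rw [hw₁c]
      push_cast
      rw [div_eq_mul_inv, mul_inv]
      field_simp
      simp only [Complex.ofReal_re]
    rw [hcmplx, Complex.ofReal_re]
  have hfinal : HasDerivAt (fun s : ℝ => (Ψ ((s : ℝ) : ℂ)).re) dΨ.re r := hΨr.real_of_complex
  have hn : HasDerivAt (fun s : ℝ => (1 - s) ^ 2) (-(2 * (1 - r))) r := by
    have h1 : HasDerivAt (fun s : ℝ => 1 - s) (-1) r := by
      simpa using (hasDerivAt_id r).const_sub 1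
    have h2 := h1.pow 2
    refine h2.congr_deriv ?_
    push_cast
    ring
  have hm : HasDerivAt (fun s : ℝ => (1 - s * w₁) * (s - w₁))
      ((-w₁) * (r - w₁) + (1 - r * w₁) * 1) r := by
    have h1 : HasDerivAt (fun s : ℝ => 1 - s * w₁) (-w₁) r := by
      simpa using ((hasDerivAt_id r).mul_const w₁).const_sub 1
    have h2 : HasDerivAt (fun s : ℝ => s - w₁) 1 r := (hasDerivAt_id r).sub_const w₁
    exact h1.mul h2
  have hminv : HasDerivAt (fun s : ℝ => ((1 - s * w₁) * (s - w₁))⁻¹)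
      (-((-w₁) * (r - w₁) + (1 - r * w₁) * 1) / ((1 - r * w₁) * (r - w₁)) ^ 2) r := hm.inv hm_ne
  have hA : HasDerivAt (fun s : ℝ => (Φ ((s : ℝ) : ℂ)).re - cρ) dA.re r :=
    hdA.real_of_complex.sub_const cρ
  have hPA : HasDerivAt
      (fun s : ℝ => ((1 - s) ^ 2 * ((1 - s * w₁) * (s - w₁))⁻¹) * ((Φ ((s : ℝ) : ℂ)).re - cρ))
      (((-(2 * (1 - r))) * ((1 - r * w₁) * (r - w₁))⁻¹
          + (1 - r) ^ 2 * (-((-w₁) * (r - w₁) + (1 - r * w₁) * 1) / ((1 - r * w₁) * (r - w₁)) ^ 2))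
          * ((Φ ((r : ℝ) : ℂ)).re - cρ)
        + (1 - r) ^ 2 * ((1 - r * w₁) * (r - w₁))⁻¹ * dA.re) r := by
    exact (hn.mul hminv).mul hA
  have hPA' : HasDerivAt (fun s : ℝ => (Ψ ((s : ℝ) : ℂ)).re) _ r :=
    hPA.congr_of_eventuallyEq hEq
  have huniq := hPA'.unique hfinal
  rw [← huniq] at hΨre_le
  simpa [hrc, hcρ, hw₁c] using hΨre_le

lemma upper
    (f : ℂ → ℂ) (hf : DifferentiableOn ℂ f doubleSlitPlane)
    (hreal : ∀ x : ℝ, x ∈ Ioo (-1 : ℝ) 1 → (f x).im = 0)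
    (hup : ∀ z : ℂ, 0 < z.im → 0 ≤ (f z).im)
    (g : ℝ → ℝ) (hg : ∀ x : ℝ, g x = (f x).re)
    (hmono : StrictMonoOn g (Ioo (-1 : ℝ) 1))
    (c₁ c₃ : ℝ) (hc₁ : c₁ ∈ Ioo (-1 : ℝ) 1) (h1 : g c₁ = c₃)
    (x : ℝ) (hx : x ∈ Ioo (-1 : ℝ) 1) (hxc : x ≠ c₁) :
    deriv g x / (g x - c₃) ≤ (1 - c₁) / ((x - c₁) * (1 - x)) := by
  obtain ⟨w₁, hw₁, hkw₁⟩ := exists_param hc₁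
  obtain ⟨r, hr, hkr⟩ := exists_param hx
  have hrw : r ≠ w₁ := by
    intro h
    apply hxc
    rw [← hkr, ← hkw₁, h]
  have hr' := abs_lt.mp hr
  have hw₁' := abs_lt.mp hw₁
  have h1r2 : (0:ℝ) < 1 + r ^ 2 := by positivity
  have h1w2 : (0:ℝ) < 1 + w₁ ^ 2 := by positivity
  have hr2 : r ^ 2 < 1 := by nlinarith [hr'.1, hr'.2]
  have hw2 : w₁ ^ 2 < 1 := by nlinarith [hw₁'.1, hw₁'.2]
  have hrw₁lt : (1 : ℝ) - r * w₁ > 0 := by nlinarith [sq_nonneg (r - w₁)]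
  -- the dilated inequality for each ρ ∈ (0,1)
  have key : ∀ ρ : ℝ, ρ ∈ Ioo (0:ℝ) 1 →
      ((-(2 * (1 - r))) * ((1 - r * w₁) * (r - w₁))⁻¹
          + (1 - r) ^ 2 * (-((-w₁) * (r - w₁) + (1 - r * w₁) * 1) / ((1 - r * w₁) * (r - w₁)) ^ 2))
          * ((f (K ((ρ:ℂ) * ((r:ℝ):ℂ)))).re - (f (K ((ρ:ℂ) * ((w₁:ℝ):ℂ)))).re)
        + (1 - r) ^ 2 * ((1 - r * w₁) * (r - w₁))⁻¹
          * (deriv f (K ((ρ:ℂ) * ((r:ℝ):ℂ)))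
              * (2 * (1 - ((ρ:ℂ) * ((r:ℝ):ℂ)) ^ 2) / (1 + ((ρ:ℂ) * ((r:ℝ):ℂ)) ^ 2) ^ 2)
              * (ρ:ℂ)).re ≤ 0 := by
    intro ρ hρ
    have hρinv : 1 < ρ⁻¹ := by
      have h2 : ρ * ρ⁻¹ = 1 := mul_inv_cancel₀ hρ.1.ne'
      nlinarith [hρ.1, hρ.2, inv_pos.mpr hρ.1]
    have hw₁abs : 0 ≤ |w₁| := abs_nonneg _
    set R : ℝ := min ρ⁻¹ (2 / (1 + |w₁|)) with hRdef
    have hRgt : 1 < R := by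
      apply lt_min hρinv
      rw [one_lt_div (by linarith)]
      linarith
    have hRw : R * |w₁| < 1 := by
      have h2 : R ≤ 2 / (1 + |w₁|) := min_le_right _ _
      have h3 : R * |w₁| ≤ (2 / (1 + |w₁|)) * |w₁| := mul_le_mul_of_nonneg_right h2 hw₁abs
      have h4 : (2 / (1 + |w₁|)) * |w₁| < 1 := by
        rw [div_mul_eq_mul_div, div_lt_one (by linarith)]
        linarith
      linarith
    have hnormρ : ∀ w : ℂ, ‖w‖ < R → normSq ((ρ:ℂ) * w) < 1 := by
      intro w hw
      have h2 : ‖w‖ < ρ⁻¹ := lt_of_lt_of_le hw (min_le_left _ _)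
      have h3 : ρ * ‖w‖ < 1 := by
        have h4 : ρ * ‖w‖ < ρ * ρ⁻¹ := by
          apply mul_lt_mul_of_pos_left h2 hρ.1
        rwa [mul_inv_cancel₀ hρ.1.ne'] at h4
      rw [normSq_mul, Complex.normSq_ofReal, ← Complex.sq_norm w]
      have h5 : 0 ≤ ρ * ‖w‖ := mul_nonneg hρ.1.le (norm_nonneg w)
      nlinarith [mul_nonneg h5 (by linarith : (0:ℝ) ≤ 1 - ρ * ‖w‖)]
    have hmemdsp : ∀ w : ℂ, ‖w‖ < R → K ((ρ:ℂ) * w) ∈ doubleSlitPlane :=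
      fun w hw => K_mem_dsp (hnormρ w hw)
    have hΦd : DifferentiableOn ℂ (fun w => f (K ((ρ:ℂ) * w))) (Metric.ball 0 R) := by
      intro w hw
      have hwR : ‖w‖ < R := by simpa [Complex.dist_eq] using hw
      apply DifferentiableAt.differentiableWithinAt
      have hinner : DifferentiableAt ℂ (fun w : ℂ => (ρ:ℂ) * w) w :=
        (differentiableAt_id.const_mul _)
      have hKd : DifferentiableAt ℂ K ((ρ:ℂ) * w) :=
        (K_hasDerivAt (K_denom_ne (hnormρ w hwR))).differentiableAt
      have hfd : DifferentiableAt ℂ f (K ((ρ:ℂ) * w)) :=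
        hf.differentiableAt (isOpen_dsp.mem_nhds (hmemdsp w hwR))
      exact hfd.comp w (hKd.comp w hinner)
    have hQreal : ∀ a : ℝ, |a| ≤ 1 → ((fun w => f (K ((ρ:ℂ) * w))) ((a:ℝ):ℂ)).im = 0 := by
      intro a ha
      simp only
      have h6 : ((ρ:ℂ) * ((a:ℝ):ℂ)) = (((ρ * a : ℝ)):ℂ) := by push_cast; ring
      rw [h6, K_ofReal]
      apply hreal
      apply kR_mem
      rw [abs_mul, abs_of_pos hρ.1]
      nlinarith [hρ.1, hρ.2, abs_nonneg a]
    have hQpos : ∀ w : ℂ, ‖w‖ ≤ 1 → 0 < w.im →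
        0 ≤ ((fun w => f (K ((ρ:ℂ) * w))) w).im := by
      intro w hw hwim
      simp only
      apply hup
      rw [K_im]
      have hns : normSq ((ρ:ℂ) * w) < 1 := hnormρ w (lt_of_le_of_lt hw hRgt)
      have him : ((ρ:ℂ) * w).im = ρ * w.im := by simp
      apply div_pos
      · rw [him]
        have : 0 < ρ * w.im := mul_pos hρ.1 hwim
        nlinarith
      · exact normSq_pos.mpr (K_denom_ne hns)
    have hrR : ‖((r:ℝ):ℂ)‖ < R := by
      rw [Complex.norm_real, Real.norm_eq_abs]
      linarith
    have hdA : HasDerivAt (fun w => f (K ((ρ:ℂ) * w)))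
        (deriv f (K ((ρ:ℂ) * ((r:ℝ):ℂ)))
          * (2 * (1 - ((ρ:ℂ) * ((r:ℝ):ℂ)) ^ 2) / (1 + ((ρ:ℂ) * ((r:ℝ):ℂ)) ^ 2) ^ 2)
          * (ρ:ℂ)) ((r:ℝ):ℂ) := by
      have hinner : HasDerivAt (fun w : ℂ => (ρ:ℂ) * w) (ρ:ℂ) ((r:ℝ):ℂ) := by
        simpa using (hasDerivAt_id ((r:ℝ):ℂ)).const_mul (ρ:ℂ)
      have hKd : HasDerivAt K
          (2 * (1 - ((ρ:ℂ) * ((r:ℝ):ℂ)) ^ 2) / (1 + ((ρ:ℂ) * ((r:ℝ):ℂ)) ^ 2) ^ 2)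
          ((ρ:ℂ) * ((r:ℝ):ℂ)) :=
        K_hasDerivAt (K_denom_ne (hnormρ _ hrR))
      have hKc := hKd.comp ((r:ℝ):ℂ) hinner
      have hfd' : HasDerivAt f (deriv f (K ((ρ:ℂ) * ((r:ℝ):ℂ)))) (K ((ρ:ℂ) * ((r:ℝ):ℂ))) :=
        (hf.differentiableAt (isOpen_dsp.mem_nhds (hmemdsp _ hrR))).hasDerivAt
      have h7 := hfd'.comp ((r:ℝ):ℂ) hKc
      simpa [Function.comp_def, mul_assoc] using h7
    exact key_ineq (fun w => f (K ((ρ:ℂ) * w))) hRgt hΦd w₁ hw₁ hRw hQreal hQpos r hr hrw hdA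
  -- pass to the limit ρ → 1⁻
  have hxd : ((x:ℝ):ℂ) ∈ doubleSlitPlane := by
    right
    simpa using abs_lt.mpr ⟨hx.1, hx.2⟩
  have hcd : ((c₁:ℝ):ℂ) ∈ doubleSlitPlane := by
    right
    simpa using abs_lt.mpr ⟨hc₁.1, hc₁.2⟩
  have hfx : DifferentiableAt ℂ f ((x:ℝ):ℂ) := hf.differentiableAt (isOpen_dsp.mem_nhds hxd)
  have hgd : HasDerivAt g ((deriv f ((x:ℝ):ℂ)).re) x := by
    have h2 := hfx.hasDerivAt.real_of_complex
    have h3 : (fun t : ℝ => (f ((t:ℝ):ℂ)).re) = g := funext fun t => (hg t).symm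
    rwa [h3] at h2
  have hK1r : K (((1:ℝ):ℂ) * ((r:ℝ):ℂ)) = ((x:ℝ):ℂ) := by
    rw [Complex.ofReal_one, one_mul, K_ofReal]
    exact_mod_cast congrArg (fun t : ℝ => ((t:ℝ):ℂ)) hkr
  have hK1w : K (((1:ℝ):ℂ) * ((w₁:ℝ):ℂ)) = ((c₁:ℝ):ℂ) := by
    rw [Complex.ofReal_one, one_mul, K_ofReal]
    exact_mod_cast congrArg (fun t : ℝ => ((t:ℝ):ℂ)) hkw₁
  set F : ℝ → ℝ := fun ρ =>
      ((-(2 * (1 - r))) * ((1 - r * w₁) * (r - w₁))⁻¹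
          + (1 - r) ^ 2 * (-((-w₁) * (r - w₁) + (1 - r * w₁) * 1) / ((1 - r * w₁) * (r - w₁)) ^ 2))
          * ((f (K ((ρ:ℂ) * ((r:ℝ):ℂ)))).re - (f (K ((ρ:ℂ) * ((w₁:ℝ):ℂ)))).re)
        + (1 - r) ^ 2 * ((1 - r * w₁) * (r - w₁))⁻¹
          * (deriv f (K ((ρ:ℂ) * ((r:ℝ):ℂ)))
              * (2 * (1 - ((ρ:ℂ) * ((r:ℝ):ℂ)) ^ 2) / (1 + ((ρ:ℂ) * ((r:ℝ):ℂ)) ^ 2) ^ 2)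
              * (ρ:ℂ)).re with hF
  have hdenne : ∀ a : ℝ, |a| < 1 → (1 : ℂ) + (((1:ℝ):ℂ) * ((a:ℝ):ℂ)) ^ 2 ≠ 0 := by
    intro a ha
    apply K_denom_ne
    rw [Complex.ofReal_one, one_mul, Complex.normSq_ofReal]
    nlinarith [abs_lt.mp ha]
  have hcont : ContinuousAt F 1 := by
    rw [hF]
    have hcast : ContinuousAt (fun ρ : ℝ => ((ρ:ℝ):ℂ)) 1 := Complex.continuous_ofReal.continuousAt
    have hKcont : ∀ (a : ℝ), |a| < 1 → ContinuousAt (fun ρ : ℝ => K ((ρ:ℂ) * ((a:ℝ):ℂ))) 1 := by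
      intro a ha
      have hpath : ContinuousAt (fun ρ : ℝ => (ρ:ℂ) * ((a:ℝ):ℂ)) 1 := hcast.mul continuousAt_const
      have hKat : ContinuousAt K (((1:ℝ):ℂ) * ((a:ℝ):ℂ)) := by
        have : ContinuousAt (fun w : ℂ => 2 * w / (1 + w ^ 2)) (((1:ℝ):ℂ) * ((a:ℝ):ℂ)) :=
          (continuousAt_const.mul continuousAt_id).div
            (continuousAt_const.add (continuousAt_id.pow 2)) (hdenne a ha)
        exact this
      show ContinuousAt (K ∘ fun ρ : ℝ => (ρ:ℂ) * ((a:ℝ):ℂ)) 1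
      exact ContinuousAt.comp (x := (1:ℝ)) hKat hpath
    have hfKr : ContinuousAt (fun ρ : ℝ => (f (K ((ρ:ℂ) * ((r:ℝ):ℂ)))).re) 1 := by
      show ContinuousAt (Complex.re ∘ f ∘ fun ρ : ℝ => K ((ρ:ℂ) * ((r:ℝ):ℂ))) 1
      apply Complex.continuous_re.continuousAt.comp
      apply ContinuousAt.comp _ (hKcont r hr)
      rw [hK1r]
      exact hfx.continuousAt
    have hfKw : ContinuousAt (fun ρ : ℝ => (f (K ((ρ:ℂ) * ((w₁:ℝ):ℂ)))).re) 1 := by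
      show ContinuousAt (Complex.re ∘ f ∘ fun ρ : ℝ => K ((ρ:ℂ) * ((w₁:ℝ):ℂ))) 1
      apply Complex.continuous_re.continuousAt.comp
      apply ContinuousAt.comp _ (hKcont w₁ hw₁)
      rw [hK1w]
      exact (hf.differentiableAt (isOpen_dsp.mem_nhds hcd)).continuousAt
    have hdf : ContinuousAt (fun ρ : ℝ => deriv f (K ((ρ:ℂ) * ((r:ℝ):ℂ)))) 1 := by
      show ContinuousAt ((deriv f) ∘ fun ρ : ℝ => K ((ρ:ℂ) * ((r:ℝ):ℂ))) 1
      apply ContinuousAt.comp _ (hKcont r hr)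
      rw [hK1r]
      exact ((hf.analyticOnNhd isOpen_dsp).deriv.continuousOn).continuousAt
        (isOpen_dsp.mem_nhds hxd)
    have hpathr : ContinuousAt (fun ρ : ℝ => (ρ:ℂ) * ((r:ℝ):ℂ)) 1 := hcast.mul continuousAt_const
    have hquot : ContinuousAt (fun ρ : ℝ =>
        2 * (1 - ((ρ:ℂ) * ((r:ℝ):ℂ)) ^ 2) / (1 + ((ρ:ℂ) * ((r:ℝ):ℂ)) ^ 2) ^ 2) 1 := by
      apply ContinuousAt.div
      · exact continuousAt_const.mul (continuousAt_const.sub (hpathr.pow 2))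
      · exact (continuousAt_const.add (hpathr.pow 2)).pow 2
      · exact pow_ne_zero 2 (hdenne r hr)
    exact (continuousAt_const.mul (hfKr.sub hfKw)).add
      (continuousAt_const.mul (Complex.continuous_re.continuousAt.comp
        ((hdf.mul hquot).mul hcast)))
  have hlim : Filter.Tendsto F (nhdsWithin 1 (Iio 1)) (nhds (F 1)) :=
    hcont.continuousWithinAt.tendsto
  have hF1 : F 1 ≤ 0 := by
    apply le_of_tendsto hlim
    filter_upwards [Ioo_mem_nhdsLT_of_mem (⟨zero_lt_one, le_refl (1:ℝ)⟩ : (1:ℝ) ∈ Ioc 0 1)]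
      with ρ hρ
    exact key ρ hρ
  -- simplify F 1
  have hkdcast : (2 * (1 - (((1:ℝ):ℂ) * ((r:ℝ):ℂ)) ^ 2) / (1 + (((1:ℝ):ℂ) * ((r:ℝ):ℂ)) ^ 2) ^ 2)
      = (((2 * (1 - r ^ 2) / (1 + r ^ 2) ^ 2 : ℝ)) : ℂ) := by
    rw [Complex.ofReal_one, one_mul]
    push_cast
    ring
  have hF1eq : F 1 =
      ((-(2 * (1 - r))) * ((1 - r * w₁) * (r - w₁))⁻¹
          + (1 - r) ^ 2 * (-((-w₁) * (r - w₁) + (1 - r * w₁) * 1) / ((1 - r * w₁) * (r - w₁)) ^ 2))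
          * (g x - c₃)
        + (1 - r) ^ 2 * ((1 - r * w₁) * (r - w₁))⁻¹
          * (deriv g x * (2 * (1 - r ^ 2) / (1 + r ^ 2) ^ 2)) := by
    rw [hF]
    simp only
    rw [hK1r, hK1w, hkdcast]
    rw [← hg x, ← hg c₁, h1]
    rw [hgd.deriv]
    congr 2
    rw [Complex.ofReal_one, mul_one, Complex.mul_re, Complex.ofReal_re, Complex.ofReal_im]
    ring
  rw [hF1eq] at hF1
  -- final algebra
  set D : ℝ := deriv g x with hD
  set A : ℝ := g x - c₃ with hA
  have hsub : x - c₁ = 2 * (r - w₁) * (1 - r * w₁) / ((1 + r ^ 2) * (1 + w₁ ^ 2)) := by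
    rw [← hkr, ← hkw₁]
    field_simp
    ring
  have h1mx : 1 - x = (1 - r) ^ 2 / (1 + r ^ 2) := by
    rw [← hkr]
    field_simp
    ring
  have h1mc : 1 - c₁ = (1 - w₁) ^ 2 / (1 + w₁ ^ 2) := by
    rw [← hkw₁]
    field_simp
    ring
  have h1mr : (0:ℝ) < 1 - r := by linarith
  have hID : ((-(2 * (1 - r))) * ((1 - r * w₁) * (r - w₁))⁻¹
          + (1 - r) ^ 2 * (-((-w₁) * (r - w₁) + (1 - r * w₁) * 1) / ((1 - r * w₁) * (r - w₁)) ^ 2))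
        * ((x - c₁) * (1 - x))
      = -((1 - r) ^ 2 * ((1 - r * w₁) * (r - w₁))⁻¹ * (2 * (1 - r ^ 2) / (1 + r ^ 2) ^ 2)
          * (1 - c₁)) := by
    rw [hsub, h1mx, h1mc]
    have hrwne : r - w₁ ≠ 0 := sub_ne_zero.mpr hrw
    field_simp
    ring
  rcases lt_or_gt_of_ne hxc with hlt | hgt
  · -- x < c₁
    have hAneg : A < 0 := by
      rw [hA, ← h1]
      have := hmono hx hc₁ hlt
      linarith
    have hdenneg : (x - c₁) * (1 - x) < 0 := by
      have h2 : x - c₁ < 0 := by linarith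
      have h3 : 0 < 1 - x := by linarith [hx.2]
      nlinarith
    have hrwneg : r - w₁ < 0 := by
      by_contra h2
      push_neg at h2
      rcases h2.lt_or_eq with h3 | h3
      · have h4 : 0 < x - c₁ := by
          rw [hsub]
          have hnum : 0 < 2 * (r - w₁) * (1 - r * w₁) := by nlinarith
          have hden : (0:ℝ) < (1 + r ^ 2) * (1 + w₁ ^ 2) := by positivity
          exact div_pos hnum hden
        exact absurd h4 (lt_asymm (sub_neg.mpr hlt))
      · exact hrw (sub_eq_zero.mp h3.symm)
    have hCPneg : (1 - r) ^ 2 * ((1 - r * w₁) * (r - w₁))⁻¹ < 0 := by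
      apply mul_neg_of_pos_of_neg (pow_pos (by linarith : (0:ℝ) < 1 - r) 2)
      exact inv_lt_zero.mpr (mul_neg_of_pos_of_neg hrw₁lt hrwneg)
    have hkdpos : (0:ℝ) < 2 * (1 - r ^ 2) / (1 + r ^ 2) ^ 2 :=
      div_pos (by nlinarith) (by positivity)
    rw [div_le_iff_of_neg hAneg, div_mul_eq_mul_div, div_le_iff_of_neg hdenneg]
    have h2 : 0 ≤ (((-(2 * (1 - r))) * ((1 - r * w₁) * (r - w₁))⁻¹
          + (1 - r) ^ 2 * (-((-w₁) * (r - w₁) + (1 - r * w₁) * 1) / ((1 - r * w₁) * (r - w₁)) ^ 2))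
          * A
        + (1 - r) ^ 2 * ((1 - r * w₁) * (r - w₁))⁻¹
          * (D * (2 * (1 - r ^ 2) / (1 + r ^ 2) ^ 2))) * ((x - c₁) * (1 - x)) := by
      have h2 := mul_nonneg (neg_nonneg.mpr hF1) (neg_nonneg.mpr hdenneg.le)
      rwa [neg_mul_neg] at h2
    have hEq2 : (((-(2 * (1 - r))) * ((1 - r * w₁) * (r - w₁))⁻¹
          + (1 - r) ^ 2 * (-((-w₁) * (r - w₁) + (1 - r * w₁) * 1) / ((1 - r * w₁) * (r - w₁)) ^ 2))
          * A
        + (1 - r) ^ 2 * ((1 - r * w₁) * (r - w₁))⁻¹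
          * (D * (2 * (1 - r ^ 2) / (1 + r ^ 2) ^ 2))) * ((x - c₁) * (1 - x))
        = ((1 - r) ^ 2 * ((1 - r * w₁) * (r - w₁))⁻¹ * (2 * (1 - r ^ 2) / (1 + r ^ 2) ^ 2))
            * (D * ((x - c₁) * (1 - x)))
          - ((1 - r) ^ 2 * ((1 - r * w₁) * (r - w₁))⁻¹ * (2 * (1 - r ^ 2) / (1 + r ^ 2) ^ 2))
            * ((1 - c₁) * A) := by
      linear_combination A * hID
    rw [hEq2] at h2
    have h5 : ((1 - r) ^ 2 * ((1 - r * w₁) * (r - w₁))⁻¹ * (2 * (1 - r ^ 2) / (1 + r ^ 2) ^ 2))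
          * ((1 - c₁) * A)
        ≤ ((1 - r) ^ 2 * ((1 - r * w₁) * (r - w₁))⁻¹ * (2 * (1 - r ^ 2) / (1 + r ^ 2) ^ 2))
          * (D * ((x - c₁) * (1 - x))) := by linarith
    have hCPkdneg : (1 - r) ^ 2 * ((1 - r * w₁) * (r - w₁))⁻¹ * (2 * (1 - r ^ 2) / (1 + r ^ 2) ^ 2) < 0 :=
      mul_neg_of_neg_of_pos hCPneg hkdpos
    exact (mul_le_mul_left_of_neg hCPkdneg).mp h5
  · -- c₁ < x
    have hApos : 0 < A := by
      rw [hA, ← h1]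
      have := hmono hc₁ hx hgt
      linarith
    have hdenpos : 0 < (x - c₁) * (1 - x) := by
      have h2 : 0 < x - c₁ := by linarith
      have h3 : 0 < 1 - x := by linarith [hx.2]
      positivity
    have hrwpos : 0 < r - w₁ := by
      by_contra h2
      push_neg at h2
      rcases h2.lt_or_eq with h3 | h3
      · have h4 : x - c₁ < 0 := by
          rw [hsub]
          have hnum : 2 * (r - w₁) * (1 - r * w₁) < 0 := by nlinarith
          have hden : (0:ℝ) < (1 + r ^ 2) * (1 + w₁ ^ 2) := by positivity
          exact div_neg_of_neg_of_pos hnum hden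
        exact absurd h4 (lt_asymm (sub_pos.mpr hgt))
      · exact hrw (sub_eq_zero.mp h3)
    have hCPpos : 0 < (1 - r) ^ 2 * ((1 - r * w₁) * (r - w₁))⁻¹ := by
      have h2 : 0 < (1 - r * w₁) * (r - w₁) := mul_pos hrw₁lt hrwpos
      exact mul_pos (pow_pos (by linarith : (0:ℝ) < 1 - r) 2) (inv_pos.mpr h2)
    have hkdpos : (0:ℝ) < 2 * (1 - r ^ 2) / (1 + r ^ 2) ^ 2 :=
      div_pos (by nlinarith) (by positivity)
    rw [div_le_div_iff₀ hApos hdenpos]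
    have h2 : (((-(2 * (1 - r))) * ((1 - r * w₁) * (r - w₁))⁻¹
          + (1 - r) ^ 2 * (-((-w₁) * (r - w₁) + (1 - r * w₁) * 1) / ((1 - r * w₁) * (r - w₁)) ^ 2))
          * A
        + (1 - r) ^ 2 * ((1 - r * w₁) * (r - w₁))⁻¹
          * (D * (2 * (1 - r ^ 2) / (1 + r ^ 2) ^ 2))) * ((x - c₁) * (1 - x)) ≤ 0 := by
      have h2 := mul_le_mul_of_nonneg_right hF1 hdenpos.le
      rwa [zero_mul] at h2
    have hEq2 : (((-(2 * (1 - r))) * ((1 - r * w₁) * (r - w₁))⁻¹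
          + (1 - r) ^ 2 * (-((-w₁) * (r - w₁) + (1 - r * w₁) * 1) / ((1 - r * w₁) * (r - w₁)) ^ 2))
          * A
        + (1 - r) ^ 2 * ((1 - r * w₁) * (r - w₁))⁻¹
          * (D * (2 * (1 - r ^ 2) / (1 + r ^ 2) ^ 2))) * ((x - c₁) * (1 - x))
        = ((1 - r) ^ 2 * ((1 - r * w₁) * (r - w₁))⁻¹ * (2 * (1 - r ^ 2) / (1 + r ^ 2) ^ 2))
            * (D * ((x - c₁) * (1 - x)))
          - ((1 - r) ^ 2 * ((1 - r * w₁) * (r - w₁))⁻¹ * (2 * (1 - r ^ 2) / (1 + r ^ 2) ^ 2))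
            * ((1 - c₁) * A) := by
      linear_combination A * hID
    rw [hEq2] at h2
    have h5 : ((1 - r) ^ 2 * ((1 - r * w₁) * (r - w₁))⁻¹ * (2 * (1 - r ^ 2) / (1 + r ^ 2) ^ 2))
          * (D * ((x - c₁) * (1 - x)))
        ≤ ((1 - r) ^ 2 * ((1 - r * w₁) * (r - w₁))⁻¹ * (2 * (1 - r ^ 2) / (1 + r ^ 2) ^ 2))
          * ((1 - c₁) * A) := by linarith
    exact (mul_le_mul_iff_right₀ (mul_pos hCPpos hkdpos)).mp h5


end HerglotzBounds

/-- A-priori bounds on the logarithmic derivative `f'(x)/(f(x)−c₃)` of a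
Herglotz-Pick function on the double slit plane, real and strictly increasing
on `(-1,1)`, with `f(c₁) = c₃`. -/
theorem herglotz_log_deriv_bounds
    (f : ℂ → ℂ) (hf : DifferentiableOn ℂ f doubleSlitPlane)
    (hreal : ∀ x : ℝ, x ∈ Ioo (-1 : ℝ) 1 → (f x).im = 0)
    (hup : ∀ z : ℂ, 0 < z.im → 0 ≤ (f z).im)
    (hdown : ∀ z : ℂ, z.im < 0 → (f z).im ≤ 0)
    (g : ℝ → ℝ) (hg : ∀ x : ℝ, g x = (f x).re)
    (hmono : StrictMonoOn g (Ioo (-1 : ℝ) 1))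
    (c₁ c₃ : ℝ) (hc₁ : c₁ ∈ Ioo (-1 : ℝ) 1) (h1 : g c₁ = c₃) :
    ∀ x ∈ Ioo (-1 : ℝ) 1, x ≠ c₁ →
      (1 + c₁) / ((x - c₁) * (1 + x)) ≤ deriv g x / (g x - c₃) ∧
      deriv g x / (g x - c₃) ≤ (1 - c₁) / ((x - c₁) * (1 - x)) := by
  intro x hx hxc
  constructor
  · -- lower bound via reflection z ↦ -f(-z)
    set f₂ : ℂ → ℂ := fun z => -f (-z) with hf₂def
    set g₂ : ℝ → ℝ := fun t => -g (-t) with hg₂def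
    have hdspneg : ∀ z : ℂ, z ∈ doubleSlitPlane → -z ∈ doubleSlitPlane := by
      intro z hz
      rcases hz with h | h
      · left; simpa using h
      · right; simpa using h
    have hf₂ : DifferentiableOn ℂ f₂ doubleSlitPlane := by
      apply DifferentiableOn.neg
      exact DifferentiableOn.comp hf (differentiable_neg.differentiableOn)
        (fun z hz => hdspneg z hz)
    have hreal₂ : ∀ t : ℝ, t ∈ Ioo (-1 : ℝ) 1 → (f₂ t).im = 0 := by
      intro t ht
      have h2 : (-t : ℝ) ∈ Ioo (-1 : ℝ) 1 := by
        constructor <;> [linarith [ht.2]; linarith [ht.1]]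
      have h3 := hreal (-t) h2
      simp only [hf₂def, Complex.neg_im]
      rw [show -((t : ℝ) : ℂ) = (((-t : ℝ)) : ℂ) by push_cast; ring]
      rw [h3, neg_zero]
    have hup₂ : ∀ z : ℂ, 0 < z.im → 0 ≤ (f₂ z).im := by
      intro z hz
      have h2 : (-z).im < 0 := by simpa using hz
      have h3 := hdown (-z) h2
      simp only [hf₂def, Complex.neg_im]
      linarith
    have hg₂ : ∀ t : ℝ, g₂ t = (f₂ t).re := by
      intro t
      simp only [hf₂def, hg₂def, Complex.neg_re]
      rw [show -((t : ℝ) : ℂ) = (((-t : ℝ)) : ℂ) by push_cast; ring]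
      rw [hg (-t)]
    have hmono₂ : StrictMonoOn g₂ (Ioo (-1 : ℝ) 1) := by
      intro a ha b hb hab
      have ha' : (-a : ℝ) ∈ Ioo (-1 : ℝ) 1 := by
        constructor <;> [linarith [ha.2]; linarith [ha.1]]
      have hb' : (-b : ℝ) ∈ Ioo (-1 : ℝ) 1 := by
        constructor <;> [linarith [hb.2]; linarith [hb.1]]
      have := hmono hb' ha' (by linarith)
      simp only [hg₂def]
      linarith
    have hc₁₂ : (-c₁ : ℝ) ∈ Ioo (-1 : ℝ) 1 := by
      constructor <;> [linarith [hc₁.2]; linarith [hc₁.1]]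
    have h1₂ : g₂ (-c₁) = -c₃ := by
      simp only [hg₂def, neg_neg, h1]
    have hx₂ : (-x : ℝ) ∈ Ioo (-1 : ℝ) 1 := by
      constructor <;> [linarith [hx.2]; linarith [hx.1]]
    have hxc₂ : (-x : ℝ) ≠ -c₁ := fun h => hxc (by linarith [neg_injective h])
    have hbound := HerglotzBounds.upper f₂ hf₂ hreal₂ hup₂ g₂ hg₂ hmono₂ (-c₁) (-c₃) hc₁₂ h1₂ (-x) hx₂ hxc₂
    -- compute deriv g₂ (-x)
    have hxd : ((x:ℝ):ℂ) ∈ doubleSlitPlane := by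
      right
      simpa using abs_lt.mpr ⟨hx.1, hx.2⟩
    have hfx : DifferentiableAt ℂ f ((x:ℝ):ℂ) := hf.differentiableAt (HerglotzBounds.isOpen_dsp.mem_nhds hxd)
    have hgd : HasDerivAt g ((deriv f ((x:ℝ):ℂ)).re) x := by
      have h2 := hfx.hasDerivAt.real_of_complex
      have h3 : (fun t : ℝ => (f ((t:ℝ):ℂ)).re) = g := funext fun t => (hg t).symm
      rwa [h3] at h2
    have hgd₂ : HasDerivAt g₂ ((deriv f ((x:ℝ):ℂ)).re) (-x) := by
      have h2 : HasDerivAt (fun t : ℝ => -t) (-1 : ℝ) (-x) := by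
        exact hasDerivAt_neg (-x)
      have h3 : HasDerivAt (fun t : ℝ => g (-t)) ((deriv f ((x:ℝ):ℂ)).re * (-1)) (-x) := by
        have h4 : HasDerivAt g ((deriv f ((x:ℝ):ℂ)).re) ((fun t : ℝ => -t) (-x)) := by
          simpa using hgd
        exact h4.comp (-x) h2
      have h5 := h3.neg
      simp only [hg₂def]
      refine h5.congr_deriv ?_
      ring
    have hDg : deriv g x = (deriv f ((x:ℝ):ℂ)).re := hgd.deriv
    have hDg₂ : deriv g₂ (-x) = (deriv f ((x:ℝ):ℂ)).re := hgd₂.deriv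
    rw [hDg₂] at hbound
    have hg₂x : g₂ (-x) = -g x := by simp [hg₂def]
    rw [hg₂x] at hbound
    rw [hDg]
    have hA : -g x - -c₃ = -(g x - c₃) := by ring
    rw [hA] at hbound
    rw [div_neg] at hbound
    have hRHS : (1 - -c₁) / ((-x - -c₁) * (1 - -x)) = -((1 + c₁) / ((x - c₁) * (1 + x))) := by
      rw [show (-x - -c₁) * (1 - -x) = -((x - c₁) * (1 + x)) by ring]
      rw [div_neg]
      ring_nf
    rw [hRHS] at hbound
    linarith
  · -- upper bound
    exact HerglotzBounds.upper f hf hreal hup g hg hmono c₁ c₃ hc₁ h1 x hx hxc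
end

section
/- Let f : [c₂, 1] → ℝ be C¹ with f' convex on [c₂,1], f(c₂) = c₄, f'(c₂) = S, and f(1) ≤ M (i.e. sup bound M ≥ c₄ on f over [c₂,1] with ∫_{c₂}^1 f' ≤ M − c₄). Define K = 2(M−c₄)/(1−c₂)² − S/(1−c₂). Then for all x ∈ (c₂, 1): f(x) ≤ c₄ + S(x−c₂) + (M − c₄ − S(1−c₂))·(x−c₂)²/(1−c₂)². -/
open Set intervalIntegral

/-- Quadratic upper bound on `(c₂,1)` for a `C¹` function with convex
derivative, `f(c₂) = c₄`, `f'(c₂) = S`, and total increase on `[c₂,1]`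
bounded by `M − c₄`. -/
theorem quadratic_upper_bound
    (f : ℝ → ℝ) (c₂ c₄ S M : ℝ) (hc₂ : c₂ < 1) (hS : 0 < S) (hM : c₄ ≤ M)
    (hf : ContDiffOn ℝ 1 f (Icc c₂ 1))
    (hconv : ConvexOn ℝ (Icc c₂ 1) (deriv f))
    (hval : f c₂ = c₄) (hder : deriv f c₂ = S)
    (hint : (∫ y in c₂..1, deriv f y) ≤ M - c₄) :
    ∀ x ∈ Ioo c₂ 1,
      f x ≤ c₄ + S * (x - c₂) +
        (M - c₄ - S * (1 - c₂)) * (x - c₂) ^ 2 / (1 - c₂) ^ 2 := by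
  intro x hx
  obtain ⟨hcx, hx1⟩ := hx
  have h1c : (0:ℝ) < 1 - c₂ := by linarith
  have hxc : (0:ℝ) < x - c₂ := by linarith
  set K : ℝ := 2 * (M - c₄ - S * (1 - c₂)) / (1 - c₂) ^ 2 with hK
  -- the affine comparison function
  set g : ℝ → ℝ := fun y => S + K * (y - c₂) with hg
  -- continuity of derivWithin on the closed interval
  have hUD : UniqueDiffOn ℝ (Icc c₂ 1) := uniqueDiffOn_Icc hc₂
  have hdc : ContinuousOn (derivWithin f (Icc c₂ 1)) (Icc c₂ 1) :=
    hf.continuousOn_derivWithin hUD le_rfl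
  -- derivWithin = deriv on the interior
  have heq : ∀ y ∈ Ioo c₂ 1, derivWithin f (Icc c₂ 1) y = deriv f y := by
    intro y hy
    exact derivWithin_of_mem_nhds (Icc_mem_nhds hy.1 hy.2)
  -- interval integrability of deriv f on subintervals
  have hII : ∀ a b : ℝ, c₂ ≤ a → b ≤ 1 → a ≤ b →
      IntervalIntegrable (deriv f) MeasureTheory.volume a b := by
    intro a b ha hb hab
    have h0 : IntervalIntegrable (derivWithin f (Icc c₂ 1)) MeasureTheory.volume a b := by
      apply ContinuousOn.intervalIntegrable
      exact hdc.mono (by rw [uIcc_of_le hab]; exact Icc_subset_Icc ha hb)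
    apply h0.congr_ae
    rw [Filter.EventuallyEq, MeasureTheory.ae_iff,
      MeasureTheory.Measure.restrict_apply' measurableSet_uIoc]
    have hsub : {y | ¬ derivWithin f (Icc c₂ 1) y = deriv f y} ∩ Set.uIoc a b
        ⊆ ({c₂, 1} : Set ℝ) := by
      rintro y ⟨hy1, hy2⟩
      by_contra hy3
      simp only [mem_insert_iff, mem_singleton_iff, not_or] at hy3
      apply hy1
      apply heq
      rw [uIoc_of_le hab] at hy2
      constructor
      · rcases lt_or_eq_of_le (le_trans ha hy2.1.le) with h | h
        · exact h
        · exact absurd h.symm hy3.1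
      · rcases lt_or_eq_of_le (le_trans hy2.2 hb) with h | h
        · exact h
        · exact absurd h hy3.2
    have hnull : MeasureTheory.volume ({c₂, 1} : Set ℝ) = 0 :=
      (Set.Finite.insert c₂ (Set.finite_singleton 1)).measure_zero _
    exact MeasureTheory.measure_mono_null hsub hnull
  -- derivative at interior points
  have hdAt : ∀ y ∈ Ioo c₂ 1, HasDerivAt f (deriv f y) y := by
    intro y hy
    have hn : Icc c₂ 1 ∈ nhds y := Icc_mem_nhds hy.1 hy.2
    exact ((hf.differentiableOn one_ne_zero y (Ioo_subset_Icc_self hy)).differentiableAt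
      hn).hasDerivAt
  -- FTC on [c₂, b] for b in (c₂, 1]
  have hFTC : ∀ b : ℝ, c₂ < b → b ≤ 1 → (∫ y in c₂..b, deriv f y) = f b - f c₂ := by
    intro b hb hb1
    apply integral_eq_sub_of_hasDeriv_right_of_le hb.le
    · exact (hf.continuousOn).mono (Icc_subset_Icc le_rfl hb1)
    · intro y hy
      exact (hdAt y ⟨hy.1, lt_of_lt_of_le hy.2 hb1⟩).hasDerivWithinAt
    · exact hII c₂ b le_rfl hb1 hb.le
  -- integral of the affine function g
  have hgint : ∀ a b : ℝ, (∫ y in a..b, g y)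
      = S * (b - a) + K * ((b - c₂) ^ 2 - (a - c₂) ^ 2) / 2 := by
    intro a b
    have hD : ∀ y : ℝ, HasDerivAt (fun y => S * y + K * (y - c₂) ^ 2 / 2) (g y) y := by
      intro y
      have h1 : HasDerivAt (fun y : ℝ => S * y) S y := by
        simpa using (hasDerivAt_id y).const_mul S
      have h2 : HasDerivAt (fun y : ℝ => K * (y - c₂) ^ 2 / 2) (K * (y - c₂)) y := by
        have := (((hasDerivAt_id y).sub_const c₂).pow 2).const_mul K |>.div_const 2
        refine this.congr_deriv ?_
        simp only [id]; norm_num; ring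
      exact h1.add h2
    have hc : Continuous g := by
      apply continuous_const.add (continuous_const.mul (continuous_id.sub continuous_const))
    rw [integral_eq_sub_of_hasDerivAt (fun y _ => hD y) (hc.intervalIntegrable a b)]
    ring
  have hgII : ∀ a b : ℝ, IntervalIntegrable g MeasureTheory.volume a b := by
    intro a b
    exact (continuous_const.add
      (continuous_const.mul (continuous_id.sub continuous_const))).intervalIntegrable a b
  have hmemc : c₂ ∈ Icc c₂ 1 := ⟨le_rfl, hc₂.le⟩
  have hmemx : x ∈ Icc c₂ 1 := ⟨hcx.le, hx1.le⟩
  have hmem1 : (1:ℝ) ∈ Icc c₂ 1 := ⟨hc₂.le, le_rfl⟩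
  -- key: ∫_{c₂}^x deriv f ≤ ∫_{c₂}^x g
  have hkey : (∫ y in c₂..x, deriv f y) ≤ ∫ y in c₂..x, g y := by
    rcases le_or_gt (deriv f x) (g x) with hle | hgt
    · -- deriv f ≤ g on [c₂, x] by convexity
      apply intervalIntegral.integral_mono_on hcx.le (hII c₂ x le_rfl hx1.le hcx.le)
        (hgII c₂ x)
      intro y hy
      rcases eq_or_lt_of_le hy.1 with h | h
      · subst h; simp [hg, hder]
      rcases eq_or_lt_of_le hy.2 with h2 | h2
      · subst h2; exact hle
      have hsec : (x - c₂) * deriv f y ≤ (x - y) * S + (y - c₂) * deriv f x := by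
        have := hconv.secant_mono_aux1 hmemc hmemx h h2
        rwa [hder] at this
      have hgx : deriv f x ≤ S + K * (x - c₂) := hle
      have hprod : 0 ≤ (y - c₂) * (S + K * (x - c₂) - deriv f x) :=
        mul_nonneg (by linarith) (by linarith)
      have hmul : (x - c₂) * deriv f y ≤ (x - c₂) * (S + K * (y - c₂)) := by
        nlinarith [hsec, hprod]
      simp only [hg]
      exact le_of_mul_le_mul_left hmul hxc
    · -- g ≤ deriv f on [x, 1], compare over [x,1] and use total bound
      have hlow : ∀ y ∈ Icc x 1, g y ≤ deriv f y := by
        intro y hy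
        rcases eq_or_lt_of_le hy.1 with h | h
        · subst h; exact hgt.le
        have hyI : y ∈ Icc c₂ 1 := ⟨le_trans hcx.le hy.1, hy.2⟩
        have hsec : (y - c₂) * deriv f x ≤ (y - x) * S + (x - c₂) * deriv f y := by
          have := hconv.secant_mono_aux1 hmemc hyI hcx h
          rwa [hder] at this
        have hgx : S + K * (x - c₂) ≤ deriv f x := hgt.le
        have hprod : 0 ≤ (y - c₂) * (deriv f x - (S + K * (x - c₂))) :=
          mul_nonneg (by linarith) (by linarith)
        have hmul : (x - c₂) * (S + K * (y - c₂)) ≤ (x - c₂) * deriv f y := by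
          nlinarith [hsec, hprod]
        simp only [hg]
        exact le_of_mul_le_mul_left hmul hxc
      have h2 : (∫ y in x..1, g y) ≤ ∫ y in x..1, deriv f y :=
        intervalIntegral.integral_mono_on hx1.le (hgII x 1)
          (hII x 1 hcx.le le_rfl hx1.le) hlow
      have hadd : (∫ y in c₂..x, deriv f y) + (∫ y in x..1, deriv f y)
          = ∫ y in c₂..1, deriv f y :=
        intervalIntegral.integral_add_adjacent_intervals
          (hII c₂ x le_rfl hx1.le hcx.le) (hII x 1 hcx.le le_rfl hx1.le)
      have hg1 : (∫ y in c₂..1, g y) = M - c₄ := by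
        rw [hgint, hK]
        field_simp
        ring
      have hgsplit : (∫ y in c₂..x, g y) + (∫ y in x..1, g y) = ∫ y in c₂..1, g y :=
        intervalIntegral.integral_add_adjacent_intervals (hgII c₂ x) (hgII x 1)
      linarith [hint, h2, hadd, hg1, hgsplit]
  -- conclude
  have hfx : f x = c₄ + ∫ y in c₂..x, deriv f y := by
    rw [hFTC x hcx hx1.le, hval]; ring
  rw [hfx]
  have : (∫ y in c₂..x, g y)
      = S * (x - c₂) + (M - c₄ - S * (1 - c₂)) * (x - c₂) ^ 2 / (1 - c₂) ^ 2 := by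
    rw [hgint, hK]
    field_simp
    ring
  linarith [hkey, this.le]
end
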